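/- arXiv:2601.08051 — 2 statements merged into one kernel-verified Lean document; each statement's English description precedes it below -/
import Mathlib

section
/- Let ω_N = exp(2πi/N), z_j = R φ ω_N^{j-1} + O, and ω_j = ω_N^{j-1} R φ / N for j = 1,…,N, where O ∈ ℂ, R > 0, and |φ| = 1. Then for every z ∈ ℂ with z ∉ {z₁,…,z_N}, the partial fraction identity ∑_{j=1}^N ω_j/(z_j - z) = (1 - ((z - O)/(Rφ))^N)⁻¹ holds. -/
open Complex

lemma aux_prod_poly {N : ℕ} (hN : 1 ≤ N) {ω : ℂ} (hprim : IsPrimitiveRoot ω N) :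
    (Polynomial.X ^ N - 1 : Polynomial ℂ) =
      ∏ j ∈ Finset.range N, (Polynomial.X - Polynomial.C (ω ^ j)) := by
  rw [Polynomial.X_pow_sub_one_eq_prod (by omega) hprim]
  have himg : (Finset.range N).image (ω ^ ·) = Polynomial.nthRootsFinset N (1 : ℂ) := by
    apply Finset.eq_of_subset_of_card_le
    · intro x hx
      simp only [Finset.mem_image] at hx
      obtain ⟨j, hj, rfl⟩ := hx
      rw [Polynomial.mem_nthRootsFinset (by omega)]
      rw [← pow_mul, mul_comm, pow_mul, hprim.pow_eq_one, one_pow]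
    · rw [hprim.card_nthRootsFinset, Finset.card_image_of_injOn hprim.injOn_pow,
        Finset.card_range]
  rw [← himg, Finset.prod_image (by exact fun i hi j hj h => hprim.injOn_pow hi hj h)]

/-- Partial fraction identity for the FEAST/Butterworth rational filter:
with `ω_N = exp(2πi/N)`, poles `z_j = Rφ ω_N^j + O` and weights `ω_j = ω_N^j Rφ / N`,
one has `∑ j, ω_j/(z_j - z) = (1 - ((z-O)/(Rφ))^N)⁻¹` away from the poles. -/
theorem stmt_11 (N : ℕ) (hN : 1 ≤ N) (O : ℂ) (R : ℝ) (hR : 0 < R)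
    (φ : ℂ) (hφ : ‖φ‖ = 1) (z : ℂ)
    (hz : ∀ j : Fin N,
      z ≠ (R : ℂ) * φ * Complex.exp (2 * Real.pi * I / N) ^ (j : ℕ) + O) :
    (∑ j : Fin N,
        (Complex.exp (2 * Real.pi * I / N) ^ (j : ℕ) * (R : ℂ) * φ / N) /
          (((R : ℂ) * φ * Complex.exp (2 * Real.pi * I / N) ^ (j : ℕ) + O) - z))
      = (1 - ((z - O) / ((R : ℂ) * φ)) ^ N)⁻¹ := by
  have hNne : N ≠ 0 := by omega
  have : NeZero N := ⟨hNne⟩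
  have hN0 : (N : ℂ) ≠ 0 := Nat.cast_ne_zero.mpr hNne
  set ω : ℂ := Complex.exp (2 * Real.pi * I / N) with hωdef
  have hprim : IsPrimitiveRoot ω N := Complex.isPrimitiveRoot_exp N hNne
  have hφ0 : φ ≠ 0 := by
    intro h; rw [h] at hφ; simp at hφ
  have hR0 : (R : ℂ) ≠ 0 := by
    exact_mod_cast hR.ne'
  have hRφ : (R : ℂ) * φ ≠ 0 := mul_ne_zero hR0 hφ0
  set w : ℂ := (z - O) / ((R : ℂ) * φ) with hw
  have hwj : ∀ j, j < N → w ≠ ω ^ j := by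
    intro j hj h
    apply hz ⟨j, hj⟩
    simp only []
    rw [hw, div_eq_iff hRφ] at h
    have : z - O = (R : ℂ) * φ * ω ^ j := by rw [h]; ring
    linear_combination this
  have hw1 : w ^ N ≠ 1 := by
    intro h
    obtain ⟨i, hi, hiw⟩ := hprim.eq_pow_of_pow_eq_one h
    exact hwj i hi hiw.symm
  have hwω : ∀ j, j < N → w - ω ^ j ≠ 0 := fun j hj => sub_ne_zero.mpr (hwj j hj)
  have hd : ∀ j : Fin N, ((R : ℂ) * φ * ω ^ (j : ℕ) + O) - z
      = ((R : ℂ) * φ) * (ω ^ (j : ℕ) - w) := by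
    intro j
    rw [hw]
    field_simp
    ring
  clear_value w
  clear hw
  -- derivative identity evaluated at w
  have hpoly := aux_prod_poly hN hprim
  have hgfun : ∀ x : ℂ, ∏ j ∈ Finset.range N, (x - ω ^ j) = x ^ N - 1 := by
    intro x
    have := congrArg (Polynomial.eval x) hpoly
    simp only [Polynomial.eval_sub, Polynomial.eval_pow, Polynomial.eval_one,
      Polynomial.eval_prod, Polynomial.eval_X, Polynomial.eval_C] at this
    exact this.symm
  have hd1 : HasDerivAt (fun x : ℂ => ∏ j ∈ Finset.range N, (x - ω ^ j))
      (∑ j ∈ Finset.range N, ∏ k ∈ (Finset.range N).erase j, (w - ω ^ k)) w := by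
    have := HasDerivAt.fun_finsetProd (u := Finset.range N)
      (f := fun j (x : ℂ) => x - ω ^ j) (f' := fun _ => 1) (x := w)
      (fun j _ => (hasDerivAt_id w).sub_const (ω ^ j))
    simpa using this
  have hd2 : HasDerivAt (fun x : ℂ => ∏ j ∈ Finset.range N, (x - ω ^ j))
      ((N : ℂ) * w ^ (N - 1)) w := by
    have h2 : (fun x : ℂ => ∏ j ∈ Finset.range N, (x - ω ^ j))
        = fun x : ℂ => x ^ N - 1 := funext hgfun
    rw [h2]
    exact (hasDerivAt_pow N w).sub_const 1
  have heval : (N : ℂ) * w ^ (N - 1)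
      = ∑ j ∈ Finset.range N, ∏ k ∈ (Finset.range N).erase j, (w - ω ^ k) :=
    hd2.unique hd1
  -- heval : N * w^(N-1) = ∑ j in range N, ∏ k in erase, (w - ω^k)
  have hprod : ∀ j ∈ Finset.range N,
      ∏ k ∈ (Finset.range N).erase j, (w - ω ^ k) = (w ^ N - 1) / (w - ω ^ j) := by
    intro j hj
    rw [Finset.mem_range] at hj
    rw [eq_div_iff (hwω j hj)]
    have : (∏ k ∈ (Finset.range N).erase j, (w - ω ^ k)) * (w - ω ^ j)
        = ∏ k ∈ Finset.range N, (w - ω ^ k) := by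
      rw [mul_comm]
      exact Finset.mul_prod_erase (Finset.range N) (fun k => w - ω ^ k) (Finset.mem_range.mpr hj)
    rw [this, hgfun]
  rw [Finset.sum_congr rfl hprod] at heval
  -- heval : N * w^(N-1) = ∑ j, (w^N - 1)/(w - ω^j)
  have hsum : ∑ j ∈ Finset.range N, (1 : ℂ) / (w - ω ^ j)
      = (N : ℂ) * w ^ (N - 1) / (w ^ N - 1) := by
    rw [heval, Finset.sum_div]
    refine Finset.sum_congr rfl fun j hj => ?_
    rw [div_div, mul_comm (w - ω ^ j), ← div_div,
      div_self (sub_ne_zero.mpr hw1), one_div]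
  -- rewrite the LHS
  have hterm : ∀ j : Fin N,
      (ω ^ (j : ℕ) * (R : ℂ) * φ / N) / (((R : ℂ) * φ * ω ^ (j : ℕ) + O) - z)
        = (1 : ℂ) / N - (w / N) * (1 / (w - ω ^ (j : ℕ))) := by
    intro j
    rw [hd j]
    have h1 : ω ^ (j : ℕ) - w ≠ 0 := by
      rw [sub_ne_zero]; exact fun h => hwj (j : ℕ) j.2 h.symm
    have h2 : w - ω ^ (j : ℕ) ≠ 0 := hwω (j : ℕ) j.2
    field_simp [h1, h2]
    ring
  calc (∑ j : Fin N, (ω ^ (j : ℕ) * (R : ℂ) * φ / N) /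
          (((R : ℂ) * φ * ω ^ (j : ℕ) + O) - z))
      = ∑ j : Fin N, ((1 : ℂ) / N - (w / N) * (1 / (w - ω ^ (j : ℕ)))) := by
        exact Finset.sum_congr rfl fun j _ => hterm j
    _ = ∑ j ∈ Finset.range N, ((1 : ℂ) / N - (w / N) * (1 / (w - ω ^ j))) := by
        rw [← Fin.sum_univ_eq_sum_range]
    _ = (N : ℂ) * (1 / N) - (w / N) * ((N : ℂ) * w ^ (N - 1) / (w ^ N - 1)) := by
        rw [Finset.sum_sub_distrib, ← Finset.mul_sum, hsum]
        simp [Finset.sum_const]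
    _ = (1 - w ^ N)⁻¹ := by
        have hwpow : w * w ^ (N - 1) = w ^ N := by
          rw [← pow_succ']
          congr 1
          omega
        have h1 : w ^ N - 1 ≠ 0 := sub_ne_zero.mpr hw1
        have h1' : 1 - w ^ N ≠ 0 := fun h => hw1 (by linear_combination -h)
        field_simp [h1, h1']
        linear_combination (w ^ N - 1) * hwpow
end

section
/- Let V be a Hilbert space and E, F finite-dimensional subspaces with dim E = dim F. If δ(F, E) := sup over unit f ∈ F of dist(f, E) is strictly less than 1, then δ(E, F) = δ(F, E), i.e., the gap between E and F equals δ(F, E). -/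
open Module
open Submodule

local notation "⟪" x ", " y "⟫" => @inner ℂ _ _ x y

private lemma norm_sq_split {V : Type*} [NormedAddCommGroup V] [InnerProductSpace ℂ V]
    (K : Submodule ℂ V) [HasOrthogonalProjection K] (v : V) :
    ‖v‖ * ‖v‖ = ‖v - (orthogonalProjectionOnto K v : V)‖ * ‖v - (orthogonalProjectionOnto K v : V)‖
      + ‖(orthogonalProjectionOnto K v : V)‖ * ‖(orthogonalProjectionOnto K v : V)‖ := by
  exact orthogonalProjectionFn_norm_sq K v

/-- One-sided estimate: if every `e ∈ E` is the projection of some `f ∈ F`, then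
`δ(E,F) ≤ δ(F,E)`. -/
private lemma aux_le {V : Type*} [NormedAddCommGroup V] [InnerProductSpace ℂ V]
    [CompleteSpace V] (E F : Submodule ℂ V)
    [FiniteDimensional ℂ E] [FiniteDimensional ℂ F]
    (hsurj : ∀ e ∈ E, ∃ f ∈ F, ((orthogonalProjectionOnto E f : V)) = e) :
    ‖((1 : V →L[ℂ] V) - F.subtypeL.comp (orthogonalProjectionOnto F)).comp
        (E.subtypeL.comp (orthogonalProjectionOnto E))‖
      ≤ ‖((1 : V →L[ℂ] V) - E.subtypeL.comp (orthogonalProjectionOnto E)).comp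
        (F.subtypeL.comp (orthogonalProjectionOnto F))‖ := by
  set δ := ‖((1 : V →L[ℂ] V) - E.subtypeL.comp (orthogonalProjectionOnto E)).comp
        (F.subtypeL.comp (orthogonalProjectionOnto F))‖ with hδ
  have hδ0 : 0 ≤ δ := norm_nonneg _
  -- main pointwise estimate
  have key : ∀ e ∈ E, ‖e - (orthogonalProjectionOnto F e : V)‖ ≤ δ * ‖e‖ := by
    intro e heE
    rcases eq_or_ne e 0 with rfl | hne
    · simp
    obtain ⟨f, hfF, hfe⟩ := hsurj e heE
    have hf0 : f ≠ 0 := by rintro rfl; simp at hfe; exact hne hfe.symm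
    -- ⟪e, f⟫ = ‖e‖²
    have h1 : ⟪e, f⟫ = (‖e‖ : ℂ) ^ 2 := by
      have := inner_orthogonalProjection_eq_of_mem_left (K := E) ⟨e, heE⟩ f
      simp only [Submodule.coe_inner] at this ⊢
      rw [← this, hfe, inner_self_eq_norm_sq_to_K]
      norm_cast
    -- ⟪Q_F e, f⟫ = ⟪e, f⟫
    have h2 : ⟪(orthogonalProjectionOnto F e : V), f⟫ = ⟪e, f⟫ := by
      have this : ⟪(orthogonalProjectionOnto F e : V), f⟫ = ⟪e, (orthogonalProjectionOnto F f : V)⟫ := inner_starProjection_left_eq_right F e f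
      rw [this, (show (orthogonalProjectionOnto F f : V) = f from starProjection_eq_self_iff.mpr hfF)]
    -- Cauchy-Schwarz: ‖e‖² ≤ ‖Q_F e‖ ‖f‖
    have h3 : ‖e‖ * ‖e‖ ≤ ‖(orthogonalProjectionOnto F e : V)‖ * ‖f‖ := by
      have := norm_inner_le_norm (𝕜 := ℂ) (orthogonalProjectionOnto F e : V) f
      rw [h2, h1] at this
      calc ‖e‖ * ‖e‖ = ‖((‖e‖ : ℂ)) ^ 2‖ := by
            rw [norm_pow, Complex.norm_real, Real.norm_eq_abs, abs_norm, sq]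
        _ ≤ _ := this
    -- ‖e‖² ≥ (1 - δ²)‖f‖²
    have h4 : ‖f‖ * ‖f‖ - δ * ‖f‖ * (δ * ‖f‖) ≤ ‖e‖ * ‖e‖ := by
      have hb : ‖f - (orthogonalProjectionOnto E f : V)‖ ≤ δ * ‖f‖ := by
        have := (((1 : V →L[ℂ] V) - E.subtypeL.comp (orthogonalProjectionOnto E)).comp
          (F.subtypeL.comp (orthogonalProjectionOnto F))).le_opNorm f
        rw [← hδ] at this
        simpa [ContinuousLinearMap.comp_apply, ContinuousLinearMap.sub_apply,
          (starProjection_eq_self_iff.mpr hfF : (orthogonalProjectionOnto F f : V) = f)] using this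
      have hsplit := norm_sq_split E f
      rw [hfe] at hsplit
      rw [hfe] at hb
      nlinarith [mul_self_le_mul_self (norm_nonneg (f - e)) hb]
    have hsplit2 := norm_sq_split F e
    have hfpos : 0 < ‖f‖ := norm_pos_iff.mpr hf0
    have hepos : 0 < ‖e‖ := norm_pos_iff.mpr hne
    -- conclude
    set a := ‖e - (orthogonalProjectionOnto F e : V)‖ with ha
    set c := ‖(orthogonalProjectionOnto F e : V)‖ with hc
    have ha0 : 0 ≤ a := norm_nonneg _
    have hc0 : 0 ≤ c := norm_nonneg _
    have hb4 : (‖e‖*‖e‖)*(‖e‖*‖e‖) ≤ (c*c)*(‖f‖*‖f‖) := by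
      nlinarith [mul_self_le_mul_self (mul_self_nonneg ‖e‖) h3]
    have key2 : a*a*(‖f‖*‖f‖) ≤ (δ*‖e‖)*(δ*‖e‖)*(‖f‖*‖f‖) := by
      nlinarith [hb4, h4, hsplit2, mul_pos hepos hepos, mul_pos hfpos hfpos]
    have haa : a*a ≤ (δ*‖e‖)*(δ*‖e‖) :=
      le_of_mul_le_mul_right key2 (mul_pos hfpos hfpos)
    nlinarith [haa, ha0, mul_nonneg hδ0 hepos.le]
  refine ContinuousLinearMap.opNorm_le_bound _ hδ0 fun v => ?_
  have hEv : ((orthogonalProjectionOnto E v : V)) ∈ E := Submodule.coe_mem _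
  have := key _ hEv
  have hle : ‖(orthogonalProjectionOnto E v : V)‖ ≤ ‖v‖ := by
    have h := ContinuousLinearMap.le_opNorm (orthogonalProjectionOnto E) v
    calc ‖(orthogonalProjectionOnto E v : V)‖ = ‖orthogonalProjectionOnto E v‖ := rfl
      _ ≤ ‖orthogonalProjectionOnto E‖ * ‖v‖ := h
      _ ≤ 1 * ‖v‖ := by gcongr; exact orthogonalProjection_norm_le E
      _ = ‖v‖ := one_mul _
  calc ‖(((1 : V →L[ℂ] V) - F.subtypeL.comp (orthogonalProjectionOnto F)).comp
        (E.subtypeL.comp (orthogonalProjectionOnto E))) v‖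
      = ‖(orthogonalProjectionOnto E v : V) - (orthogonalProjectionOnto F (orthogonalProjectionOnto E v : V) : V)‖ := by
        simp [ContinuousLinearMap.comp_apply, ContinuousLinearMap.sub_apply]
    _ ≤ δ * ‖(orthogonalProjectionOnto E v : V)‖ := key _ hEv
    _ ≤ δ * ‖v‖ := by gcongr

/-- For finite-dimensional subspaces `E`, `F` of equal dimension in a Hilbert space, if
`δ(F, E) = ‖(I - Q_E) Q_F‖ < 1` then `δ(E, F) = δ(F, E)`, so the gap equals `δ(F, E)`. -/
theorem stmt_16 {V : Type*} [NormedAddCommGroup V] [InnerProductSpace ℂ V]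
    [CompleteSpace V] (E F : Submodule ℂ V)
    [FiniteDimensional ℂ E] [FiniteDimensional ℂ F]
    (hdim : Module.finrank ℂ E = Module.finrank ℂ F)
    (hlt : ‖((1 : V →L[ℂ] V) - E.subtypeL.comp (Submodule.orthogonalProjectionOnto E)).comp
        (F.subtypeL.comp (Submodule.orthogonalProjectionOnto F))‖ < 1) :
    ‖((1 : V →L[ℂ] V) - F.subtypeL.comp (Submodule.orthogonalProjectionOnto F)).comp
        (E.subtypeL.comp (Submodule.orthogonalProjectionOnto E))‖
      = ‖((1 : V →L[ℂ] V) - E.subtypeL.comp (Submodule.orthogonalProjectionOnto E)).comp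
        (F.subtypeL.comp (Submodule.orthogonalProjectionOnto F))‖ := by
  -- the projection `F → E` as a linear map
  set B : F →ₗ[ℂ] E := ((orthogonalProjectionOnto E).toLinearMap).comp F.subtype with hB
  have hBinj : Function.Injective B := by
    rw [← LinearMap.ker_eq_bot, LinearMap.ker_eq_bot']
    intro f hf
    have hfapp : orthogonalProjectionOnto E (f : V) = 0 := hf
    have hT : (((1 : V →L[ℂ] V) - E.subtypeL.comp (orthogonalProjectionOnto E)).comp
        (F.subtypeL.comp (orthogonalProjectionOnto F))) (f : V) = (f : V) := by
      simp [ContinuousLinearMap.comp_apply, ContinuousLinearMap.sub_apply,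
        (starProjection_eq_self_iff.mpr f.2 : (orthogonalProjectionOnto F (f : V) : V) = f), hfapp]
    have := (((1 : V →L[ℂ] V) - E.subtypeL.comp (orthogonalProjectionOnto E)).comp
        (F.subtypeL.comp (orthogonalProjectionOnto F))).le_opNorm (f : V)
    rw [hT] at this
    have hf0 : ‖(f : V)‖ = 0 := by
      by_contra h
      have hpos : 0 < ‖(f : V)‖ := lt_of_le_of_ne (norm_nonneg _) (Ne.symm h)
      nlinarith
    ext
    simpa using norm_eq_zero.mp hf0
  have hBsurj : Function.Surjective B :=
    (LinearMap.injective_iff_surjective_of_finrank_eq_finrank hdim.symm).mp hBinj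
  have hsurjE : ∀ e ∈ E, ∃ f ∈ F, ((orthogonalProjectionOnto E f : V)) = e := by
    intro e he
    obtain ⟨f, hf⟩ := hBsurj ⟨e, he⟩
    exact ⟨f, f.2, by rw [show orthogonalProjectionOnto E (f : V) = B f from rfl, hf]⟩
  -- the projection `E → F` as a linear map
  set A : E →ₗ[ℂ] F := ((orthogonalProjectionOnto F).toLinearMap).comp E.subtype with hA
  have hAinj : Function.Injective A := by
    rw [← LinearMap.ker_eq_bot, LinearMap.ker_eq_bot']
    intro e he
    have heapp : orthogonalProjectionOnto F (e : V) = 0 := he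
    obtain ⟨f, hfF, hfe⟩ := hsurjE (e : V) e.2
    have h1 : (inner ℂ (e : V) f : ℂ) = (‖(e : V)‖ : ℂ) ^ 2 := by
      have := inner_orthogonalProjection_eq_of_mem_left (K := E) e f
      simp only [Submodule.coe_inner] at this
      rw [← this, hfe, inner_self_eq_norm_sq_to_K]
      norm_cast
    have h2 : (inner ℂ ((orthogonalProjectionOnto F (e : V)) : V) f : ℂ) = inner ℂ (e : V) f := by
      have this : inner ℂ (orthogonalProjectionOnto F (e : V) : V) f = inner ℂ (e : V) (orthogonalProjectionOnto F f : V) := inner_starProjection_left_eq_right F (e : V) f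
      rw [this, (show (orthogonalProjectionOnto F f : V) = f from starProjection_eq_self_iff.mpr hfF)]
    rw [heapp] at h2
    simp only [Submodule.coe_zero, inner_zero_left] at h2
    rw [h1] at h2
    have : ‖(e : V)‖ = 0 := by
      have := pow_eq_zero_iff (n := 2) (by norm_num) |>.mp
        (by exact_mod_cast h2.symm : ((‖(e : V)‖ : ℂ)) ^ 2 = 0)
      exact_mod_cast this
    ext
    simpa using norm_eq_zero.mp this
  have hAsurj : Function.Surjective A :=
    (LinearMap.injective_iff_surjective_of_finrank_eq_finrank hdim).mp hAinj
  have hsurjF : ∀ f ∈ F, ∃ e ∈ E, ((orthogonalProjectionOnto F e : V)) = f := by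
    intro f hf
    obtain ⟨e, he⟩ := hAsurj ⟨f, hf⟩
    exact ⟨e, e.2, by rw [show orthogonalProjectionOnto F (e : V) = A e from rfl, he]⟩
  exact le_antisymm (aux_le E F hsurjE) (aux_le F E hsurjF)
end
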